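/- Every non-trivial welded knot K satisfies u(K) ≤ (c(K) − 1)/2. -/

import Mathlib

/-!
Gauss codes for welded knots.

A Gauss code is a cyclic word in which each chord label occurs exactly twice,
once as a tail (`isHead = false`) and once as a head (`isHead = true`), both
occurrences carrying the common sign of the chord.  We represent the cyclic
word by a linear list of entries, working up to rotation (`List.rotate`) and
injective relabelling of the chords.
-/

/-- An endpoint of a chord: `(chord label, isHead, sign)`, where `isHead = false`
means a tail (over-passing) endpoint and `isHead = true` a head (under-passing)
endpoint, and the sign `true`/`false` stands for `+1`/`-1`. -/
abbrev GEntry : Type := ℕ × Bool × Bool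

/-- A (linear representative of a cyclic) word of endpoints. -/
abbrev GWord : Type := List GEntry

/-- The set of chord labels occurring in a word. -/
def chordSet (w : GWord) : Set ℕ := {a | ∃ e ∈ w, e.1 = a}

/-- `w` is a Gauss code: every chord label that occurs in `w` occurs exactly
twice, once as a tail and once as a head, with a common sign. -/
def IsGaussCode (w : GWord) : Prop :=
  ∀ a ∈ chordSet w,
    w.countP (fun e => e.1 == a) = 2 ∧
    ∃ s : Bool, (a, false, s) ∈ w ∧ (a, true, s) ∈ w

/-- The crossing change at the set `S` of chords: at every chord of `S`, the
tail and head markings of its two occurrences are exchanged and its sign is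
reversed. -/
def crossingChange (S : Finset ℕ) (w : GWord) : GWord :=
  w.map fun e => if e.1 ∈ S then (e.1, !e.2.1, !e.2.2) else e

/-- Deletion of the chord `a` (both of its endpoints) from the word. -/
def deleteChord (a : ℕ) (w : GWord) : GWord :=
  w.filter fun e => e.1 != a

/-- Equality of words up to cyclic permutation. -/
def RotEq (w w' : GWord) : Prop := ∃ n : ℕ, w' = w.rotate n

/-- Renaming the chords of a word by `f`. -/
def relabelWord (f : ℕ → ℕ) (w : GWord) : GWord := w.map fun e => (f e.1, e.2)

/-- Equality of words up to cyclic permutation and (injective) renaming of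
the chords. -/
def CyclicRename (w w' : GWord) : Prop :=
  ∃ (n : ℕ) (f : ℕ → ℕ), Function.Injective f ∧ w' = relabelWord f (w.rotate n)

/-- Raw C1 move (deleting direction): deletion of a chord whose two endpoints
occupy adjacent positions; the inserting direction is the converse relation. -/
def C1delRaw (u v : GWord) : Prop :=
  ∃ (x y : GWord) (a : ℕ) (h s : Bool),
    (∀ e ∈ x ++ y, e.1 ≠ a) ∧
    u = x ++ (a, h, s) :: (a, !h, s) :: y ∧
    v = x ++ y

/-- Raw W move: interchange of two adjacent endpoints that are both tails
(of any two chords, regardless of signs). -/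
def WRaw (u v : GWord) : Prop :=
  ∃ (x y : GWord) (a b : ℕ) (s t : Bool),
    u = x ++ (a, false, s) :: (b, false, t) :: y ∧
    v = x ++ (b, false, t) :: (a, false, s) :: y

/-- Raw C2 move (deleting direction): deletion of a pair of chords of opposite
signs whose two tails occupy adjacent positions and whose two heads occupy
adjacent positions. -/
def C2delRaw (u v : GWord) : Prop :=
  ∃ (x y z : GWord) (a b : ℕ) (s : Bool),
    a ≠ b ∧
    (∀ e ∈ x ++ y ++ z, e.1 ≠ a ∧ e.1 ≠ b) ∧
    (u = x ++ (a, false, s) :: (b, false, !s) :: (y ++ (a, true, s) :: (b, true, !s) :: z) ∨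
     u = x ++ (a, false, s) :: (b, false, !s) :: (y ++ (b, true, !s) :: (a, true, s) :: z)) ∧
    v = x ++ y ++ z

/-- Raw C3 move: the Gauss-code translation of the planar Reidemeister move of
type 3.  Three strands `A`, `B`, `C` (modelled on the lines `y = -1`, `y = x`,
`y = -x` and their directions `(1,0)`, `(1,1)`, `(-1,1)`, possibly reversed
according to `dA`, `dB`, `dC`) meet pairwise in the chords `a = AB`, `b = AC`,
`c = BC`; `oAB`, `oAC`, `oBC` record which strand passes over in each pair and
must come from a linear height order.  The six endpoints form three adjacent
pairs, one on each strand, and the move exchanges the order within each pair;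
the head/tail pattern is determined by the heights and the signs by the heights
and the directions, as in a planar diagram. -/
def C3Raw (u v : GWord) : Prop :=
  ∃ (x y z t : GWord) (a b c : ℕ) (oAB oAC oBC dA dB dC swap : Bool),
    a ≠ b ∧ a ≠ c ∧ b ≠ c ∧
    (oAB = oBC → oAC = oAB) ∧
    (let sa : Bool := (dA == dB) == oAB
     let sb : Bool := (dA == dC) == oAC
     let sc : Bool := (dB == dC) == oBC
     let PA : GWord :=
       if dA then [(a, !oAB, sa), (b, !oAC, sb)] else [(b, !oAC, sb), (a, !oAB, sa)]
     let PB : GWord :=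
       if dB then [(a, oAB, sa), (c, !oBC, sc)] else [(c, !oBC, sc), (a, oAB, sa)]
     let PC : GWord :=
       if dC then [(b, oAC, sb), (c, oBC, sc)] else [(c, oBC, sc), (b, oAC, sb)]
     let Q1 : GWord := if swap then PC else PB
     let Q2 : GWord := if swap then PB else PC
     u = x ++ PA ++ y ++ Q1 ++ z ++ Q2 ++ t ∧
     v = x ++ PA.reverse ++ y ++ Q1.reverse ++ z ++ Q2.reverse ++ t)

/-- One welded Reidemeister move (C1, C2, C3 or W, in either direction),
performed up to cyclic permutation and renaming of chords. -/
def WeldedStep (u v : GWord) : Prop :=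
  ∃ u₀ v₀ : GWord, CyclicRename u u₀ ∧ CyclicRename v₀ v ∧
    (C1delRaw u₀ v₀ ∨ C1delRaw v₀ u₀ ∨ C2delRaw u₀ v₀ ∨ C2delRaw v₀ u₀ ∨
     C3Raw u₀ v₀ ∨ C3Raw v₀ u₀ ∨ WRaw u₀ v₀)

/-- Welded equivalence: two Gauss codes are welded-equivalent if they are
related by a finite sequence of C1, C2, C3 and W moves (on cyclic words). -/
def WeldedEquiv : GWord → GWord → Prop := Relation.EqvGen WeldedStep

/-- A Gauss code represents the trivial welded knot iff it is
welded-equivalent to the empty code. -/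
def RepresentsTrivial (w : GWord) : Prop := WeldedEquiv w []

/-- One C1 or W move (in either direction), up to cyclic permutation and
renaming of chords. -/
def CWStep (u v : GWord) : Prop :=
  ∃ u₀ v₀ : GWord, CyclicRename u u₀ ∧ CyclicRename v₀ v ∧
    (C1delRaw u₀ v₀ ∨ C1delRaw v₀ u₀ ∨ WRaw u₀ v₀)

/-- Relatedness by a finite sequence of C1 and W moves alone. -/
def CWEquiv : GWord → GWord → Prop := Relation.EqvGen CWStep

/-- One W move, up to cyclic permutation. -/
def WStepRot (u v : GWord) : Prop :=
  ∃ u₀ v₀ : GWord, RotEq u u₀ ∧ RotEq v₀ v ∧ WRaw u₀ v₀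

/-- One deleting C1 move, up to cyclic permutation. -/
def C1StepRot (u v : GWord) : Prop :=
  ∃ u₀ v₀ : GWord, RotEq u u₀ ∧ RotEq v₀ v ∧ C1delRaw u₀ v₀

/-- In the linear word `v`, no chord has its head occurring strictly before
its tail. -/
def TailsFirst (v : GWord) : Prop :=
  ¬ ∃ (x y z : GWord) (a : ℕ) (s s' : Bool),
      v = x ++ (a, true, s) :: (y ++ (a, false, s') :: z)

/-- A Gauss code is descending if the cyclic word can be cut at some point and
read in one of the two directions so that every chord's tail occurs before its
head. -/
def IsDescending (w : GWord) : Prop :=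
  ∃ n : ℕ, TailsFirst (w.rotate n) ∨ TailsFirst ((w.rotate n).reverse)

/-- `c(D)`: the minimal number of chords of a Gauss code representing the same
welded knot as `D`. -/
noncomputable def minCrossing (D : GWord) : ℕ :=
  sInf {n : ℕ | ∃ D' : GWord, IsGaussCode D' ∧ WeldedEquiv D D' ∧ (chordSet D').ncard = n}

/-- `u(D)`: the minimal cardinality of a set `S` of chords of `D` such that the
crossing change at `S` turns `D` into a Gauss code representing the trivial
welded knot. -/
noncomputable def unknottingNumWord (D : GWord) : ℕ :=
  sInf {k : ℕ | ∃ S : Finset ℕ, ↑S ⊆ chordSet D ∧ S.card = k ∧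
    WeldedEquiv (crossingChange S D) []}

/-- `u(K)`: the minimum of `u(D')` over all Gauss codes `D'` representing the
same welded knot as `D`. -/
noncomputable def unknottingNum (D : GWord) : ℕ :=
  sInf {k : ℕ | ∃ D' : GWord, IsGaussCode D' ∧ WeldedEquiv D D' ∧ unknottingNumWord D' = k}
section Aux

open List Relation

/-! ### Fresh labels -/

lemma le_foldr_max : ∀ (l : List ℕ), ∀ x ∈ l, x ≤ l.foldr max 0
  | a :: l, x, hx => by
    rcases List.mem_cons.1 hx with rfl | h
    · exact le_max_left _ _
    · exact le_trans (le_foldr_max l x h) (le_max_right _ _)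

lemma exists_fresh (w : GWord) : ∃ a : ℕ, ∀ e ∈ w, e.1 ≠ a := by
  refine ⟨(w.map Prod.fst).foldr max 0 + 1, fun e he h => ?_⟩
  have := le_foldr_max (w.map Prod.fst) e.1 (List.mem_map_of_mem he)
  omega

/-! ### Cyclic renaming basics -/

lemma relabel_id (w : GWord) : relabelWord id w = w := by
  simp [relabelWord]

lemma cyclicRename_refl (w : GWord) : CyclicRename w w :=
  ⟨0, id, Function.injective_id, by rw [List.rotate_zero, relabel_id]⟩

lemma cyclicRename_rotate (w : GWord) (n : ℕ) : CyclicRename w (w.rotate n) :=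
  ⟨n, id, Function.injective_id, (relabel_id _).symm⟩

lemma exists_rotate_back (w : GWord) (n : ℕ) : ∃ m, (w.rotate n).rotate m = w := by
  rcases eq_or_ne w [] with rfl | hne
  · exact ⟨0, by simp⟩
  · have hl : 0 < w.length := List.length_pos_iff.2 hne
    refine ⟨w.length - n % w.length, ?_⟩
    rw [List.rotate_rotate]
    have hd := Nat.div_add_mod n w.length
    have hlt : n % w.length < w.length := Nat.mod_lt _ hl
    have h1 : n + (w.length - n % w.length) = w.length * (n / w.length + 1) := by
      rw [Nat.mul_add, Nat.mul_one]; omega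
    rw [← List.rotate_mod, h1, Nat.mul_mod_right, List.rotate_zero]

lemma cyclicRename_of_rotate (w : GWord) (n : ℕ) : CyclicRename (w.rotate n) w := by
  obtain ⟨m, hm⟩ := exists_rotate_back w n
  exact ⟨m, id, Function.injective_id, by rw [hm, relabel_id]⟩

/-! ### Welded steps from raw moves -/

lemma weldedEquiv_of_WRaw {u v : GWord} (h : WRaw u v) : WeldedEquiv u v :=
  EqvGen.rel _ _ ⟨u, v, cyclicRename_refl u, cyclicRename_refl v, by tauto⟩

lemma weldedEquiv_of_C1 {u v : GWord} (h : C1delRaw u v) : WeldedEquiv u v :=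
  EqvGen.rel _ _ ⟨u, v, cyclicRename_refl u, cyclicRename_refl v, by tauto⟩

lemma weldedEquiv_rotate (w : GWord) (n : ℕ) : WeldedEquiv w (w.rotate n) := by
  obtain ⟨a, ha⟩ := exists_fresh w
  set u' : GWord := w ++ [(a, false, true), (a, true, true)] with hu'
  have hc1 : C1delRaw u' w := by
    refine ⟨w, [], a, false, true, by simpa using ha, by simp [hu'], by simp⟩
  have step1 : WeldedStep w u' :=
    ⟨w, u', cyclicRename_refl w, cyclicRename_refl u', Or.inr (Or.inl hc1)⟩
  have step2 : WeldedStep u' (w.rotate n) :=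
    ⟨u', w, cyclicRename_refl u', cyclicRename_rotate w n, Or.inl hc1⟩
  exact EqvGen.trans _ _ _ (EqvGen.rel _ _ step1) (EqvGen.rel _ _ step2)

lemma weldedEquiv_of_rotate {w : GWord} {n : ℕ} (h : WeldedEquiv (w.rotate n) []) :
    WeldedEquiv w [] :=
  EqvGen.trans _ _ _ (weldedEquiv_rotate w n) h

end Aux
section Aux2

open List Relation

/-! ### W-move bubbling -/

lemma bubble (a : ℕ) (s : Bool) :
    ∀ (m X Y : GWord), (∀ e ∈ m, e.2.1 = false) →
      WeldedEquiv (X ++ (a, false, s) :: (m ++ Y)) (X ++ (m ++ (a, false, s) :: Y))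
  | [], X, Y, _ => EqvGen.refl _
  | (b, hb, t) :: m', X, Y, hm => by
    have hb0 : hb = false := hm (b, hb, t) (by simp)
    subst hb0
    have step : WRaw (X ++ (a, false, s) :: (b, false, t) :: (m' ++ Y))
        (X ++ (b, false, t) :: (a, false, s) :: (m' ++ Y)) :=
      ⟨X, m' ++ Y, a, b, s, t, rfl, rfl⟩
    have h2 := bubble a s m' (X ++ [(b, false, t)]) Y (fun e he => hm e (by simp [he]))
    refine EqvGen.trans _ _ _ (weldedEquiv_of_WRaw step) ?_
    simpa [WeldedEquiv] using h2

/-! ### Sublist characterisations -/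

lemma pair_sublist {w : GWord} {u v : GEntry} :
    (∃ x y z, w = x ++ u :: (y ++ v :: z)) ↔ [u, v] <+ w := by
  constructor
  · rintro ⟨x, y, z, rfl⟩
    induction x with
    | nil =>
      refine List.Sublist.cons₂ u ?_
      simpa [List.singleton_sublist] using Or.inr (List.mem_cons_self _ _)
    | cons e x ih => exact ih.cons e
  · intro h
    induction w with
    | nil => simp at h
    | cons e w ih =>
      cases h with
      | cons _ h' =>
        obtain ⟨x, y, z, hx⟩ := ih h'
        exact ⟨e :: x, y, z, by rw [hx]; rfl⟩
      | cons_cons _ h' =>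
        obtain ⟨y, z, hy⟩ := List.append_of_mem (List.singleton_sublist.1 h')
        exact ⟨[], y, z, by simp [hy]⟩

lemma tailsFirst_iff {w : GWord} :
    TailsFirst w ↔ ¬ ∃ (a : ℕ) (s s' : Bool), [(a, true, s), (a, false, s')] <+ w := by
  unfold TailsFirst
  constructor
  · rintro h ⟨a, s, s', hs⟩
    obtain ⟨x, y, z, hw⟩ := pair_sublist.2 hs
    exact h ⟨x, y, z, a, s, s', hw⟩
  · rintro h ⟨x, y, z, a, s, s', hw⟩
    exact h ⟨a, s, s', pair_sublist.1 ⟨x, y, z, hw⟩⟩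

/-- No tail occurs strictly before its head (up to the linear order). -/
def HeadsFirstSub (w : GWord) : Prop :=
  ¬ ∃ (a : ℕ) (s s' : Bool), [(a, false, s), (a, true, s')] <+ w

lemma not_pair_sub {p : GEntry → Prop} :
    ∀ (Y : GWord) {Z : GWord} {v u' v' : GEntry},
      [u', v'] <+ Y ++ v :: Z → p u' → p v' →
      (∀ e ∈ Y, ¬ p e) → (∀ e ∈ Z, ¬ p e) → False
  | [], Z, v, u', v', h, hu', hv', _, hZ => by
    cases h with
    | cons _ h' => exact hZ u' (h'.subset (List.mem_cons_self)) hu'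
    | cons_cons _ h' => exact hZ v' (List.singleton_sublist.1 h') hv'
  | y :: Y, Z, v, u', v', h, hu', hv', hY, hZ => by
    cases h with
    | cons _ h' =>
      exact not_pair_sub Y h' hu' hv' (fun e he => hY e (List.mem_cons_of_mem _ he)) hZ
    | cons_cons _ h' => exact hY _ (List.mem_cons_self) hu'

lemma pair_sub_eq {p : GEntry → Prop} :
    ∀ (X : GWord) {Y Z : GWord} {u v u' v' : GEntry},
      [u', v'] <+ X ++ u :: (Y ++ v :: Z) → p u' → p v' →
      (∀ e ∈ X, ¬ p e) → (∀ e ∈ Y, ¬ p e) → (∀ e ∈ Z, ¬ p e) →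
      u' = u ∧ v' = v
  | [], Y, Z, u, v, u', v', h, hu', hv', _, hY, hZ => by
    cases h with
    | cons _ h' => exact absurd (not_pair_sub Y h' hu' hv' hY hZ) (by simp)
    | cons_cons _ h' =>
      refine ⟨rfl, ?_⟩
      have hv'' := List.singleton_sublist.1 h'
      rcases List.mem_append.1 hv'' with h1 | h1
      · exact absurd hv' (hY _ h1)
      · rcases List.mem_cons.1 h1 with rfl | h1
        · rfl
        · exact absurd hv' (hZ _ h1)
  | x :: X, Y, Z, u, v, u', v', h, hu', hv', hX, hY, hZ => by
    cases h with
    | cons _ h' =>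
      exact pair_sub_eq X h' hu' hv' (fun e he => hX e (List.mem_cons_of_mem _ he)) hY hZ
    | cons_cons _ h' => exact absurd hu' (hX _ (List.mem_cons_self))

end Aux2
section Aux3

open List Relation

lemma countP_one_decomp {p : GEntry → Bool} :
    ∀ {w : GWord}, w.countP p = 1 →
      ∃ Y v Z, w = Y ++ v :: Z ∧ p v ∧ (∀ e ∈ Y, ¬ p e) ∧ (∀ e ∈ Z, ¬ p e)
  | [], h => by simp at h
  | e :: w, h => by
    rw [List.countP_cons] at h
    by_cases hp : p e
    · have h0 : w.countP p = 0 := by rw [if_pos hp] at h; omega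
      exact ⟨[], e, w, rfl, hp, by simp, List.countP_eq_zero.1 h0⟩
    · have h1 : w.countP p = 1 := by rw [if_neg hp] at h; omega
      obtain ⟨Y, v, Z, rfl, hv, hY, hZ⟩ := countP_one_decomp h1
      have hY' : ∀ x ∈ e :: Y, ¬ p x := by
        intro x hx; rcases List.mem_cons.1 hx with rfl | hx
        · exact hp
        · exact hY x hx
      exact ⟨e :: Y, v, Z, rfl, hv, hY', hZ⟩

lemma countP_two_decomp {p : GEntry → Bool} :
    ∀ {w : GWord}, w.countP p = 2 →
      ∃ X u Y v Z, w = X ++ u :: (Y ++ v :: Z) ∧ p u ∧ p v ∧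
        (∀ e ∈ X, ¬ p e) ∧ (∀ e ∈ Y, ¬ p e) ∧ (∀ e ∈ Z, ¬ p e)
  | [], h => by simp at h
  | e :: w, h => by
    rw [List.countP_cons] at h
    by_cases hp : p e
    · have h1 : w.countP p = 1 := by rw [if_pos hp] at h; omega
      obtain ⟨Y, v, Z, rfl, hv, hY, hZ⟩ := countP_one_decomp h1
      exact ⟨[], e, Y, v, Z, rfl, hp, hv, by simp, hY, hZ⟩
    · have h2 : w.countP p = 2 := by rw [if_neg hp] at h; omega
      obtain ⟨X, u, Y, v, Z, rfl, hu, hv, hX, hY, hZ⟩ := countP_two_decomp h2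
      have hX' : ∀ x ∈ e :: X, ¬ p x := by
        intro x hx; rcases List.mem_cons.1 hx with rfl | hx
        · exact hp
        · exact hX x hx
      exact ⟨e :: X, u, Y, v, Z, rfl, hu, hv, hX', hY, hZ⟩

lemma gauss_decomp {w : GWord} (hw : IsGaussCode w) {a : ℕ} (ha : a ∈ chordSet w) :
    ∃ (X Y Z : GWord) (b s : Bool), w = X ++ (a, b, s) :: (Y ++ (a, !b, s) :: Z) ∧
      (∀ e ∈ X, e.1 ≠ a) ∧ (∀ e ∈ Y, e.1 ≠ a) ∧ (∀ e ∈ Z, e.1 ≠ a) := by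
  obtain ⟨hc, s, ht, hh⟩ := hw a ha
  obtain ⟨X, u, Y, v, Z, hw', hu, hv, hX, hY, hZ⟩ := countP_two_decomp hc
  have hX' : ∀ e ∈ X, e.1 ≠ a := fun e he h => hX e he (by simp [h])
  have hY' : ∀ e ∈ Y, e.1 ≠ a := fun e he h => hY e he (by simp [h])
  have hZ' : ∀ e ∈ Z, e.1 ≠ a := fun e he h => hZ e he (by simp [h])
  have hmem : ∀ e : GEntry, e ∈ w → e.1 = a → e = u ∨ e = v := by
    intro e he h1
    rw [hw'] at he
    rcases List.mem_append.1 he with he | he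
    · exact absurd h1 (hX' e he)
    rcases List.mem_cons.1 he with rfl | he
    · exact Or.inl rfl
    rcases List.mem_append.1 he with he | he
    · exact absurd h1 (hY' e he)
    rcases List.mem_cons.1 he with rfl | he
    · exact Or.inr rfl
    · exact absurd h1 (hZ' e he)
  have htuv := hmem _ ht rfl
  have hhuv := hmem _ hh rfl
  have hne : ((a, false, s) : GEntry) ≠ (a, true, s) := by simp
  rcases htuv with h1 | h1 <;> rcases hhuv with h2 | h2
  · exact absurd (h1.trans h2.symm) hne
  · exact ⟨X, Y, Z, false, s, by
      simp only [Bool.not_false]; rw [hw', ← h1, ← h2], hX', hY', hZ'⟩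
  · exact ⟨X, Y, Z, true, s, by
      simp only [Bool.not_true]; rw [hw', ← h1, ← h2], hX', hY', hZ'⟩
  · exact absurd (h1.trans h2.symm) hne

/-! ### first occurrence head/tail -/

def firstIsHead (a : ℕ) (w : GWord) : Bool :=
  (w.find? (fun e => e.1 == a)).elim false (fun e => e.2.1)

lemma firstIsHead_decomp {X R : GWord} {a : ℕ} {b s : Bool}
    (hX : ∀ e ∈ X, e.1 ≠ a) : firstIsHead a (X ++ (a, b, s) :: R) = b := by
  unfold firstIsHead
  rw [List.find?_append]
  have h1 : X.find? (fun e => e.1 == a) = none :=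
    List.find?_eq_none.2 (fun x hx => by simpa using hX x hx)
  rw [h1, List.find?_cons_of_pos (p := fun e => e.1 == a) (a := (a, b, s)) (l := R) (by simp)]
  rfl

lemma firstIsHead_stable {w : GWord} {a : ℕ} {R : GWord}
    (ha : ∃ e ∈ w, e.1 = a) : firstIsHead a (w ++ R) = firstIsHead a w := by
  unfold firstIsHead
  rw [List.find?_append]
  obtain ⟨e, he, h1⟩ := ha
  have : (w.find? (fun e => e.1 == a)).isSome := by
    rw [List.find?_isSome]
    exact ⟨e, he, by simp [h1]⟩
  obtain ⟨x, hx⟩ := Option.isSome_iff_exists.1 this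
  rw [hx]
  rfl

/-! ### unique splitting -/

lemma unique_split {c : GEntry} :
    ∀ {P P' Q Q' : GWord}, P ++ c :: Q = P' ++ c :: Q' → c ∉ P → c ∉ P' →
      P = P' ∧ Q = Q'
  | [], [], Q, Q', h, _, _ => by simpa using h
  | [], p' :: P', Q, Q', h, _, hP' => by
    simp only [List.nil_append, List.cons_append, List.cons.injEq] at h
    exact absurd (by simp [h.1]) hP'
  | p :: P, [], Q, Q', h, hP, _ => by
    simp only [List.nil_append, List.cons_append, List.cons.injEq] at h
    exact absurd (by simp [h.1]) hP
  | p :: P, p' :: P', Q, Q', h, hP, hP' => by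
    simp only [List.cons_append, List.cons.injEq] at h
    obtain ⟨h1, h2⟩ := unique_split h.2 (fun hc => hP (List.mem_cons_of_mem _ hc))
      (fun hc => hP' (List.mem_cons_of_mem _ hc))
    exact ⟨by rw [h.1, h1], h2⟩

/-! ### deleting a chord -/

lemma del_sublist (X Y Z : GWord) (u v : GEntry) :
    X ++ (Y ++ Z) <+ X ++ u :: (Y ++ v :: Z) := by
  refine List.Sublist.append_left ?_ X
  refine List.Sublist.cons u ?_
  exact List.Sublist.append_left (List.sublist_cons_self v Z) Y

lemma isGaussCode_delete {X Y Z : GWord} {u v : GEntry} {a : ℕ}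
    (hu : u.1 = a) (hv : v.1 = a)
    (hX : ∀ e ∈ X, e.1 ≠ a) (hY : ∀ e ∈ Y, e.1 ≠ a) (hZ : ∀ e ∈ Z, e.1 ≠ a)
    (hw : IsGaussCode (X ++ u :: (Y ++ v :: Z))) : IsGaussCode (X ++ (Y ++ Z)) := by
  intro b hb
  obtain ⟨e, he, rfl⟩ := hb
  have hba : e.1 ≠ a := by
    rcases List.mem_append.1 he with h | h
    · exact hX e h
    rcases List.mem_append.1 h with h | h
    · exact hY e h
    · exact hZ e h
  have hbw : e.1 ∈ chordSet (X ++ u :: (Y ++ v :: Z)) :=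
    ⟨e, (del_sublist X Y Z u v).subset he, rfl⟩
  obtain ⟨hc, s, ht, hh⟩ := hw e.1 hbw
  have hub : (u.1 == e.1) = false := by
    simp only [beq_eq_false_iff_ne, ne_eq, hu]; exact fun h => hba h.symm
  have hvb : (v.1 == e.1) = false := by
    simp only [beq_eq_false_iff_ne, ne_eq, hv]; exact fun h => hba h.symm
  constructor
  · rw [List.countP_append, List.countP_cons, List.countP_append, List.countP_cons] at hc
    rw [List.countP_append, List.countP_append]
    simp only [hub, hvb, Bool.false_eq_true, if_false] at hc
    omega
  · refine ⟨s, ?_, ?_⟩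
    · have := ht
      simp only [List.mem_append, List.mem_cons] at this ⊢
      rcases this with h | h
      · exact Or.inl h
      rcases h with rfl | h
      · exact absurd hu (by simpa using hba)
      rcases h with h | h
      · exact Or.inr (Or.inl h)
      rcases h with rfl | h
      · exact absurd hv (by simpa using hba)
      · exact Or.inr (Or.inr h)
    · have := hh
      simp only [List.mem_append, List.mem_cons] at this ⊢
      rcases this with h | h
      · exact Or.inl h
      rcases h with rfl | h
      · exact absurd hu (by simpa using hba)
      rcases h with h | h
      · exact Or.inr (Or.inl h)
      rcases h with rfl | h
      · exact absurd hv (by simpa using hba)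
      · exact Or.inr (Or.inr h)

end Aux3
section Aux4

open List Relation

lemma exists_first_head :
    ∀ (w : GWord), (∃ e ∈ w, e.2.1 = true) →
      ∃ X h Y, w = X ++ h :: Y ∧ h.2.1 = true ∧ ∀ e ∈ X, e.2.1 = false
  | [], hex => by simp at hex
  | e :: w, hex => by
    by_cases he : e.2.1 = true
    · exact ⟨[], e, w, rfl, he, by simp⟩
    · have hex' : ∃ e' ∈ w, e'.2.1 = true := by
        obtain ⟨e', he', h1⟩ := hex
        rcases List.mem_cons.1 he' with rfl | he'
        · exact absurd h1 he
        · exact ⟨e', he', h1⟩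
      obtain ⟨X, h, Y, rfl, hh, hX⟩ := exists_first_head w hex'
      refine ⟨e :: X, h, Y, rfl, hh, ?_⟩
      intro x hx
      rcases List.mem_cons.1 hx with rfl | hx
      · simpa using he
      · exact hX x hx

lemma exists_last_head :
    ∀ (w : GWord), (∃ e ∈ w, e.2.1 = true) →
      ∃ X h Y, w = X ++ h :: Y ∧ h.2.1 = true ∧ ∀ e ∈ Y, e.2.1 = false
  | [], hex => by simp at hex
  | e :: w, hex => by
    by_cases hex' : ∃ e' ∈ w, e'.2.1 = true
    · obtain ⟨X, h, Y, rfl, hh, hY⟩ := exists_last_head w hex'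
      exact ⟨e :: X, h, Y, rfl, hh, hY⟩
    · have he : e.2.1 = true := by
        obtain ⟨e', he', h1⟩ := hex
        rcases List.mem_cons.1 he' with rfl | he'
        · exact h1
        · exact absurd ⟨e', he', h1⟩ hex'
      refine ⟨[], e, w, rfl, he, ?_⟩
      intro x hx
      by_contra hf
      exact hex' ⟨x, hx, by simpa using hf⟩

lemma descending_trivial :
    ∀ (n : ℕ) (w : GWord), w.length ≤ n → IsGaussCode w →
      (¬ ∃ (a : ℕ) (s s' : Bool), [(a, true, s), (a, false, s')] <+ w) →
      WeldedEquiv w []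
  | _, [], _, _, _ => EqvGen.refl _
  | 0, e :: w, hlen, _, _ => by simp at hlen
  | Nat.succ n, e :: w, hlen, hw, hTF => by
    have he1 : (e.1 : ℕ) ∈ chordSet (e :: w) := ⟨e, List.mem_cons_self, rfl⟩
    obtain ⟨_, s₁, ht1, hh1⟩ := hw e.1 he1
    obtain ⟨X, h0, Y, hsplit, hh0, hXt⟩ :=
      exists_first_head (e :: w) ⟨(e.1, true, s₁), hh1, rfl⟩
    have ha : (h0.1 : ℕ) ∈ chordSet (e :: w) := ⟨h0, by rw [hsplit]; simp, rfl⟩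
    obtain ⟨X', Y', Z', b, s, hdec, hX', hY', hZ'⟩ := gauss_decomp hw ha
    set a := h0.1 with ha_def
    have hb : b = false := by
      by_contra hbne
      have hb' : b = true := by revert hbne; cases b <;> simp
      subst hb'
      refine hTF ⟨a, s, s, pair_sublist.1 ⟨X', Y', Z', by simpa using hdec⟩⟩
    subst hb
    simp only [Bool.not_false] at hdec
    have hh0' : h0 = (a, true, s) := by
      have hmem : h0 ∈ e :: w := by rw [hsplit]; simp
      rw [hdec] at hmem
      rcases List.mem_append.1 hmem with h | h
      · exact absurd rfl (hX' h0 h)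
      rcases List.mem_cons.1 h with h | h
      · rw [h] at hh0; simp at hh0
      rcases List.mem_append.1 h with h | h
      · exact absurd rfl (hY' h0 h)
      rcases List.mem_cons.1 h with h | h
      · exact h
      · exact absurd rfl (hZ' h0 h)
    have hdec2 : e :: w = (X' ++ (a, false, s) :: Y') ++ (a, true, s) :: Z' := by
      rw [hdec]; simp
    have hsplit2 : e :: w = X ++ (a, true, s) :: Y := by rw [hsplit, hh0']
    have hcX : ((a, true, s) : GEntry) ∉ X := by
      intro hc
      have := hXt _ hc
      simp at this
    have hcX2 : ((a, true, s) : GEntry) ∉ X' ++ (a, false, s) :: Y' := by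
      intro hc
      rcases List.mem_append.1 hc with h | h
      · exact hX' _ h rfl
      rcases List.mem_cons.1 h with h | h
      · simp at h
      · exact hY' _ h rfl
    obtain ⟨hXeq, hYeq⟩ := unique_split (hsplit2.symm.trans hdec2) hcX hcX2
    have hY't : ∀ x ∈ Y', x.2.1 = false := by
      intro x hx
      exact hXt x (by rw [hXeq]; simp [hx])
    have equiv1 := bubble a s Y' X' ((a, true, s) :: Z') hY't
    have hc1 : C1delRaw (X' ++ (Y' ++ (a, false, s) :: (a, true, s) :: Z'))
        (X' ++ (Y' ++ Z')) := by
      refine ⟨X' ++ Y', Z', a, false, s, ?_, by simp, by simp⟩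
      intro x hx
      rcases List.mem_append.1 hx with hx | hx
      · rcases List.mem_append.1 hx with hx | hx
        · exact hX' x hx
        · exact hY' x hx
      · exact hZ' x hx
    have hwv : IsGaussCode (X' ++ (Y' ++ Z')) := by
      rw [hdec] at hw
      exact isGaussCode_delete (u := (a, false, s)) (v := (a, true, s))
        rfl rfl hX' hY' hZ' hw
    have hTFv : ¬ ∃ (a' : ℕ) (t t' : Bool),
        [(a', true, t), (a', false, t')] <+ X' ++ (Y' ++ Z') := by
      rintro ⟨a', t, t', hsub⟩
      refine hTF ⟨a', t, t', ?_⟩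
      rw [hdec]
      exact hsub.trans (del_sublist X' Y' Z' _ _)
    have hlenv : (X' ++ (Y' ++ Z')).length ≤ n := by
      have h1 : (X' ++ (Y' ++ Z')).length + 2 = (e :: w).length := by
        rw [hdec]; simp; omega
      simp only [List.length_cons] at h1 hlen
      omega
    have hrec := descending_trivial n (X' ++ (Y' ++ Z')) hlenv hwv hTFv
    rw [hdec]
    exact EqvGen.trans _ _ _ equiv1 (EqvGen.trans _ _ _ (weldedEquiv_of_C1 hc1) hrec)

lemma ascending_trivial :
    ∀ (n : ℕ) (w : GWord), w.length ≤ n → IsGaussCode w →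
      (¬ ∃ (a : ℕ) (s s' : Bool), [(a, false, s), (a, true, s')] <+ w) →
      WeldedEquiv w []
  | _, [], _, _, _ => EqvGen.refl _
  | 0, e :: w, hlen, _, _ => by simp at hlen
  | Nat.succ n, e :: w, hlen, hw, hHF => by
    have he1 : (e.1 : ℕ) ∈ chordSet (e :: w) := ⟨e, List.mem_cons_self, rfl⟩
    obtain ⟨_, s₁, ht1, hh1⟩ := hw e.1 he1
    obtain ⟨X, h0, Y, hsplit, hh0, hYt⟩ :=
      exists_last_head (e :: w) ⟨(e.1, true, s₁), hh1, rfl⟩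
    have ha : (h0.1 : ℕ) ∈ chordSet (e :: w) := ⟨h0, by rw [hsplit]; simp, rfl⟩
    obtain ⟨hc2, s₂, ht2, hh2⟩ := hw h0.1 ha
    obtain ⟨X', Y', Z', b, s, hdec, hX', hY', hZ'⟩ := gauss_decomp hw ha
    set a := h0.1 with ha_def
    have hb : b = true := by
      by_contra hbne
      have hb' : b = false := by revert hbne; cases b <;> simp
      subst hb'
      refine hHF ⟨a, s, s, pair_sublist.1 ⟨X', Y', Z', by simpa using hdec⟩⟩
    subst hb
    simp only [Bool.not_true] at hdec
    have hh0' : h0 = (a, true, s) := by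
      have hmem : h0 ∈ e :: w := by rw [hsplit]; simp
      rw [hdec] at hmem
      rcases List.mem_append.1 hmem with h | h
      · exact absurd rfl (hX' h0 h)
      rcases List.mem_cons.1 h with h | h
      · exact h
      rcases List.mem_append.1 h with h | h
      · exact absurd rfl (hY' h0 h)
      rcases List.mem_cons.1 h with h | h
      · rw [h] at hh0; simp at hh0
      · exact absurd rfl (hZ' h0 h)
    have hsplit2 : e :: w = X ++ (a, true, s) :: Y := by rw [hsplit, hh0']
    have hcX : ((a, true, s) : GEntry) ∉ X := by
      intro hcmem
      obtain ⟨X1, X2, hX12⟩ := List.append_of_mem hcmem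
      have hsub : [((a, true, s) : GEntry), (a, true, s)] <+ e :: w :=
        pair_sublist.1 ⟨X1, X2, Y, by rw [hsplit2, hX12]; simp⟩
      rw [hdec] at hsub
      have := pair_sub_eq (p := fun x => x.1 = a) X' hsub rfl rfl hX' hY' hZ'
      simpa using this.2
    have hcX2 : ((a, true, s) : GEntry) ∉ X' := fun hcm => hX' _ hcm rfl
    obtain ⟨hXeq, hYeq⟩ := unique_split (hsplit2.symm.trans hdec) hcX hcX2
    have hY't : ∀ x ∈ Y', x.2.1 = false := by
      intro x hx
      exact hYt x (by rw [hYeq]; simp [hx])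
    have equiv1 : WeldedEquiv (e :: w)
        (X' ++ (a, true, s) :: (a, false, s) :: (Y' ++ Z')) := by
      have h3 := bubble a s Y' (X' ++ [(a, true, s)]) Z' hY't
      have h4 := EqvGen.symm _ _ h3
      rw [hdec]
      simpa [WeldedEquiv] using h4
    have hc1 : C1delRaw (X' ++ (a, true, s) :: (a, false, s) :: (Y' ++ Z'))
        (X' ++ (Y' ++ Z')) := by
      refine ⟨X', Y' ++ Z', a, true, s, ?_, by simp, rfl⟩
      intro x hx
      rcases List.mem_append.1 hx with hx | hx
      · exact hX' x hx
      rcases List.mem_append.1 hx with hx | hx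
      · exact hY' x hx
      · exact hZ' x hx
    have hwv : IsGaussCode (X' ++ (Y' ++ Z')) := by
      rw [hdec] at hw
      exact isGaussCode_delete (u := (a, true, s)) (v := (a, false, s))
        rfl rfl hX' hY' hZ' hw
    have hHFv : ¬ ∃ (a' : ℕ) (t t' : Bool),
        [(a', false, t), (a', true, t')] <+ X' ++ (Y' ++ Z') := by
      rintro ⟨a', t, t', hsub⟩
      refine hHF ⟨a', t, t', ?_⟩
      rw [hdec]
      exact hsub.trans (del_sublist X' Y' Z' _ _)
    have hlenv : (X' ++ (Y' ++ Z')).length ≤ n := by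
      have h1 : (X' ++ (Y' ++ Z')).length + 2 = (e :: w).length := by
        rw [hdec]; simp; omega
      simp only [List.length_cons] at h1 hlen
      omega
    have hrec := ascending_trivial n (X' ++ (Y' ++ Z')) hlenv hwv hHFv
    exact EqvGen.trans _ _ _ equiv1 (EqvGen.trans _ _ _ (weldedEquiv_of_C1 hc1) hrec)

end Aux4
section Aux5

open List Relation

lemma cc_fst (S : Finset ℕ) (e : GEntry) :
    ((if e.1 ∈ S then ((e.1, !e.2.1, !e.2.2) : GEntry) else e)).1 = e.1 := by
  split <;> rfl

lemma chordSet_cc (S : Finset ℕ) (w : GWord) :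
    chordSet (crossingChange S w) = chordSet w := by
  ext a
  simp only [chordSet, crossingChange, Set.mem_setOf_eq, List.mem_map]
  constructor
  · rintro ⟨e', ⟨e, he, rfl⟩, h⟩
    exact ⟨e, he, by rwa [cc_fst] at h⟩
  · rintro ⟨e, he, h⟩
    exact ⟨_, ⟨e, he, rfl⟩, by rwa [cc_fst]⟩

lemma isGaussCode_cc (S : Finset ℕ) {w : GWord} (hw : IsGaussCode w) :
    IsGaussCode (crossingChange S w) := by
  intro a ha
  rw [chordSet_cc] at ha
  obtain ⟨hc, s, ht, hh⟩ := hw a ha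
  constructor
  · rw [crossingChange, List.countP_map, ← hc]
    apply List.countP_congr
    intro e _
    simp only [Function.comp_apply]
    rw [cc_fst]
  · by_cases hS : a ∈ S
    · exact ⟨!s, List.mem_map.2 ⟨(a, true, s), hh, by simp [hS]⟩,
        List.mem_map.2 ⟨(a, false, s), ht, by simp [hS]⟩⟩
    · exact ⟨s, List.mem_map.2 ⟨(a, false, s), ht, by simp [hS]⟩,
        List.mem_map.2 ⟨(a, true, s), hh, by simp [hS]⟩⟩

lemma cc_noheadtail {w : GWord} (hw : IsGaussCode w) (S : Finset ℕ)
    (hS : ∀ x ∈ chordSet w, (x ∈ S ↔ firstIsHead x w = true)) :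
    ¬ ∃ (a : ℕ) (s s' : Bool), [(a, true, s), (a, false, s')] <+ crossingChange S w := by
  rintro ⟨a, s, s', hsub⟩
  have haw : a ∈ chordSet w := by
    have hmem : ((a, true, s) : GEntry) ∈ crossingChange S w :=
      hsub.subset (List.mem_cons_self)
    have h1 : a ∈ chordSet (crossingChange S w) := ⟨_, hmem, rfl⟩
    rwa [chordSet_cc] at h1
  obtain ⟨X, Y, Z, b, s₀, hdec, hX, hY, hZ⟩ := gauss_decomp hw haw
  have hfh : firstIsHead a w = b := by rw [hdec]; exact firstIsHead_decomp hX
  have hab : a ∈ S ↔ b = true := by rw [← hfh]; exact hS a haw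
  have hccX : ∀ e ∈ crossingChange S X, e.1 ≠ a := by
    rintro e' he'
    obtain ⟨e0, he0, rfl⟩ := List.mem_map.1 he'
    rw [cc_fst]
    exact hX e0 he0
  have hccY : ∀ e ∈ crossingChange S Y, e.1 ≠ a := by
    rintro e' he'
    obtain ⟨e0, he0, rfl⟩ := List.mem_map.1 he'
    rw [cc_fst]
    exact hY e0 he0
  have hccZ : ∀ e ∈ crossingChange S Z, e.1 ≠ a := by
    rintro e' he'
    obtain ⟨e0, he0, rfl⟩ := List.mem_map.1 he'
    rw [cc_fst]
    exact hZ e0 he0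
  obtain ⟨σ, hccdec⟩ : ∃ σ : Bool, crossingChange S w =
      crossingChange S X ++ (a, false, σ) ::
        (crossingChange S Y ++ (a, true, σ) :: crossingChange S Z) := by
    cases b with
    | true =>
      have haS : a ∈ S := hab.2 rfl
      refine ⟨!s₀, ?_⟩
      rw [hdec]
      simp [crossingChange, haS]
    | false =>
      have haS : a ∉ S := fun h => by simpa using hab.1 h
      refine ⟨s₀, ?_⟩
      rw [hdec]
      simp [crossingChange, haS]
  rw [hccdec] at hsub
  have := pair_sub_eq (p := fun x => x.1 = a) _ hsub rfl rfl hccX hccY hccZ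
  simpa using this.1

lemma cc_notailhead {w : GWord} (hw : IsGaussCode w) (S : Finset ℕ)
    (hS : ∀ x ∈ chordSet w, (x ∈ S ↔ firstIsHead x w = false)) :
    ¬ ∃ (a : ℕ) (s s' : Bool), [(a, false, s), (a, true, s')] <+ crossingChange S w := by
  rintro ⟨a, s, s', hsub⟩
  have haw : a ∈ chordSet w := by
    have hmem : ((a, false, s) : GEntry) ∈ crossingChange S w :=
      hsub.subset (List.mem_cons_self)
    have h1 : a ∈ chordSet (crossingChange S w) := ⟨_, hmem, rfl⟩
    rwa [chordSet_cc] at h1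
  obtain ⟨X, Y, Z, b, s₀, hdec, hX, hY, hZ⟩ := gauss_decomp hw haw
  have hfh : firstIsHead a w = b := by rw [hdec]; exact firstIsHead_decomp hX
  have hab : a ∈ S ↔ b = false := by rw [← hfh]; exact hS a haw
  have hccX : ∀ e ∈ crossingChange S X, e.1 ≠ a := by
    rintro e' he'
    obtain ⟨e0, he0, rfl⟩ := List.mem_map.1 he'
    rw [cc_fst]
    exact hX e0 he0
  have hccY : ∀ e ∈ crossingChange S Y, e.1 ≠ a := by
    rintro e' he'
    obtain ⟨e0, he0, rfl⟩ := List.mem_map.1 he'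
    rw [cc_fst]
    exact hY e0 he0
  have hccZ : ∀ e ∈ crossingChange S Z, e.1 ≠ a := by
    rintro e' he'
    obtain ⟨e0, he0, rfl⟩ := List.mem_map.1 he'
    rw [cc_fst]
    exact hZ e0 he0
  obtain ⟨σ, hccdec⟩ : ∃ σ : Bool, crossingChange S w =
      crossingChange S X ++ (a, true, σ) ::
        (crossingChange S Y ++ (a, false, σ) :: crossingChange S Z) := by
    cases b with
    | false =>
      have haS : a ∈ S := hab.2 rfl
      refine ⟨!s₀, ?_⟩
      rw [hdec]
      simp [crossingChange, haS]
    | true =>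
      have haS : a ∉ S := fun h => by simpa using hab.1 h
      refine ⟨s₀, ?_⟩
      rw [hdec]
      simp [crossingChange, haS]
  rw [hccdec] at hsub
  have := pair_sub_eq (p := fun x => x.1 = a) _ hsub rfl rfl hccX hccY hccZ
  simpa using this.1

lemma cc_trivial_tails {w : GWord} (hw : IsGaussCode w) (S : Finset ℕ)
    (hS : ∀ x ∈ chordSet w, (x ∈ S ↔ firstIsHead x w = true)) :
    WeldedEquiv (crossingChange S w) [] :=
  descending_trivial (crossingChange S w).length _ le_rfl (isGaussCode_cc S hw)
    (cc_noheadtail hw S hS)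

lemma cc_trivial_heads {w : GWord} (hw : IsGaussCode w) (S : Finset ℕ)
    (hS : ∀ x ∈ chordSet w, (x ∈ S ↔ firstIsHead x w = false)) :
    WeldedEquiv (crossingChange S w) [] :=
  ascending_trivial (crossingChange S w).length _ le_rfl (isGaussCode_cc S hw)
    (cc_notailhead hw S hS)

end Aux5
section Aux6

open List Relation

/-- The finset of chord labels. -/
def chordF (w : GWord) : Finset ℕ := (w.map Prod.fst).toFinset

lemma mem_chordF {w : GWord} {a : ℕ} : a ∈ chordF w ↔ a ∈ chordSet w := by
  simp only [chordF, List.mem_toFinset, List.mem_map, chordSet, Set.mem_setOf_eq]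

lemma coe_chordF (w : GWord) : (↑(chordF w) : Set ℕ) = chordSet w := by
  ext a
  simp only [Finset.mem_coe, mem_chordF]

lemma ncard_chordSet (w : GWord) : (chordSet w).ncard = (chordF w).card := by
  rw [← coe_chordF, Set.ncard_coe_finset]

lemma chordSet_rotate (w : GWord) (n : ℕ) : chordSet (w.rotate n) = chordSet w := by
  ext a
  simp only [chordSet, Set.mem_setOf_eq]
  constructor
  · rintro ⟨e, he, rfl⟩
    exact ⟨e, (List.rotate_perm w n).subset he, rfl⟩
  · rintro ⟨e, he, rfl⟩
    exact ⟨e, (List.rotate_perm w n).symm.subset he, rfl⟩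

lemma chordF_rotate (w : GWord) (n : ℕ) : chordF (w.rotate n) = chordF w := by
  ext a
  simp only [mem_chordF, chordSet_rotate]

lemma isGaussCode_rotate {w : GWord} (hw : IsGaussCode w) (n : ℕ) :
    IsGaussCode (w.rotate n) := by
  intro a ha
  rw [chordSet_rotate] at ha
  obtain ⟨hc, s, ht, hh⟩ := hw a ha
  exact ⟨by rw [(List.rotate_perm w n).countP_eq]; exact hc,
    s, (List.rotate_perm w n).symm.subset ht, (List.rotate_perm w n).symm.subset hh⟩

lemma crossingChange_rotate (S : Finset ℕ) (w : GWord) (n : ℕ) :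
    crossingChange S (w.rotate n) = (crossingChange S w).rotate n :=
  List.map_rotate _ _ _

/-- The set of chords whose first occurrence is a head. -/
def headSet (w : GWord) : Finset ℕ :=
  (chordF w).filter (fun a => firstIsHead a w = true)

lemma headSet_spec (w : GWord) :
    ∀ x ∈ chordSet w, (x ∈ headSet w ↔ firstIsHead x w = true) := by
  intro x hx
  simp only [headSet, Finset.mem_filter, mem_chordF]
  exact ⟨fun h => h.2, fun h => ⟨hx, h⟩⟩

lemma compSet_spec (w : GWord) :
    ∀ x ∈ chordSet w, (x ∈ chordF w \ headSet w ↔ firstIsHead x w = false) := by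
  intro x hx
  simp only [Finset.mem_sdiff, headSet, Finset.mem_filter, mem_chordF]
  constructor
  · rintro ⟨h1, h2⟩
    cases hfh : firstIsHead x w
    · rfl
    · exact absurd ⟨hx, hfh⟩ h2
  · rintro h
    exact ⟨hx, fun hc => by rw [hc.2] at h; cases h⟩

lemma firstIsHead_cons_ne {e : GEntry} {w : GWord} {x : ℕ} (h : e.1 ≠ x) :
    firstIsHead x (e :: w) = firstIsHead x w := by
  unfold firstIsHead
  rw [List.find?_cons_of_neg (p := fun e => e.1 == x) (a := e) (l := w) (by simpa using h)]

lemma headSet_rotate_one {e : GEntry} {w : GWord} (hw : IsGaussCode (e :: w)) :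
    (headSet ((e :: w).rotate 1)).card = (headSet (e :: w)).card + 1 ∨
      (headSet (e :: w)).card = (headSet ((e :: w).rotate 1)).card + 1 := by
  have ha : (e.1 : ℕ) ∈ chordSet (e :: w) := ⟨e, List.mem_cons_self, rfl⟩
  obtain ⟨X, Y, Z, b, s, hdec, hX, hY, hZ⟩ := gauss_decomp hw ha
  have hXnil : X = [] := by
    cases X with
    | nil => rfl
    | cons x X' =>
      exfalso
      simp only [List.cons_append, List.cons.injEq] at hdec
      exact hX x (List.mem_cons_self) (by rw [← hdec.1])
  subst hXnil
  simp only [List.nil_append, List.cons.injEq] at hdec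
  obtain ⟨he, hweq⟩ := hdec
  have hrot : (e :: w).rotate 1 = w ++ [e] := by
    rw [List.rotate_cons_succ, List.rotate_zero]
  have hfh0 : firstIsHead e.1 (e :: w) = b := by
    have : e :: w = [] ++ (e.1, b, s) :: (Y ++ (e.1, !b, s) :: Z) := by
      simp [← he, ← hweq]
    rw [this]
    exact firstIsHead_decomp (by simp)
  have hfh1 : firstIsHead e.1 ((e :: w).rotate 1) = !b := by
    rw [hrot]
    have : w ++ [e] = Y ++ (e.1, !b, s) :: (Z ++ [e]) := by
      rw [hweq]; simp
    rw [this]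
    exact firstIsHead_decomp hY
  have hfhx : ∀ x ∈ chordSet (e :: w), x ≠ e.1 →
      firstIsHead x ((e :: w).rotate 1) = firstIsHead x (e :: w) := by
    intro x hx hne
    rw [hrot]
    obtain ⟨e', he', rfl⟩ := hx
    have he'w : e' ∈ w := by
      rcases List.mem_cons.1 he' with rfl | h
      · exact absurd rfl hne.symm
      · exact h
    rw [firstIsHead_stable ⟨e', he'w, rfl⟩]
    exact (firstIsHead_cons_ne (fun hc => hne hc.symm)).symm
  cases b with
  | false =>
    simp only [Bool.not_false] at hfh1
    have hset : headSet ((e :: w).rotate 1) = insert e.1 (headSet (e :: w)) := by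
      ext x
      by_cases hxe : x = e.1
      · subst hxe
        simp only [headSet, Finset.mem_filter, chordF_rotate, mem_chordF, hfh1, hfh0,
          Finset.mem_insert]
        simp [ha]
      · simp only [headSet, Finset.mem_filter, chordF_rotate, Finset.mem_insert]
        constructor
        · rintro ⟨h1, h2⟩
          refine Or.inr ⟨h1, ?_⟩
          rw [← hfhx x (mem_chordF.1 h1) hxe]
          exact h2
        · rintro (h | ⟨h1, h2⟩)
          · exact absurd h hxe
          · exact ⟨h1, by rw [hfhx x (mem_chordF.1 h1) hxe]; exact h2⟩
    left
    rw [hset, Finset.card_insert_of_notMem]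
    intro hmem
    rw [headSet_spec (e :: w) e.1 ha, hfh0] at hmem
    cases hmem
  | true =>
    simp only [Bool.not_true] at hfh1
    have hset : headSet ((e :: w).rotate 1) = (headSet (e :: w)).erase e.1 := by
      ext x
      by_cases hxe : x = e.1
      · subst hxe
        simp only [headSet, Finset.mem_filter, chordF_rotate, mem_chordF, hfh1, hfh0,
          Finset.mem_erase]
        simp
      · simp only [headSet, Finset.mem_filter, chordF_rotate, Finset.mem_erase, ne_eq, hxe,
          not_false_iff, true_and]
        constructor
        · rintro ⟨h1, h2⟩
          exact ⟨h1, by rw [← hfhx x (mem_chordF.1 h1) hxe]; exact h2⟩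
        · rintro ⟨h1, h2⟩
          exact ⟨h1, by rw [hfhx x (mem_chordF.1 h1) hxe]; exact h2⟩
    right
    have hmem : e.1 ∈ headSet (e :: w) := (headSet_spec (e :: w) e.1 ha).2 hfh0
    rw [hset, Finset.card_erase_of_mem hmem]
    have : 1 ≤ (headSet (e :: w)).card := Finset.card_pos.2 ⟨e.1, hmem⟩
    omega

lemma key_lemma (w : GWord) (hw : IsGaussCode w) (hn : 1 ≤ (chordSet w).ncard) :
    ∃ S : Finset ℕ, ↑S ⊆ chordSet w ∧ 2 * S.card < (chordSet w).ncard ∧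
      WeldedEquiv (crossingChange S w) [] := by
  cases w with
  | nil =>
    exfalso
    have hempty : chordSet ([] : GWord) = (∅ : Set ℕ) := by
      ext a; simp [chordSet]
    rw [hempty, Set.ncard_empty] at hn
    omega
  | cons e w =>
    have hn' : (chordSet (e :: w)).ncard = (chordF (e :: w)).card := ncard_chordSet _
    have hAsub : ↑(headSet (e :: w)) ⊆ chordSet (e :: w) := by
      rw [← coe_chordF]
      exact_mod_cast Finset.filter_subset _ _
    have hBsub : ↑(chordF (e :: w) \ headSet (e :: w)) ⊆ chordSet (e :: w) := by
      rw [← coe_chordF]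
      exact_mod_cast Finset.sdiff_subset
    have hA := cc_trivial_tails hw (headSet (e :: w)) (headSet_spec _)
    have hB := cc_trivial_heads hw (chordF (e :: w) \ headSet (e :: w)) (compSet_spec _)
    have hkB : (chordF (e :: w) \ headSet (e :: w)).card =
        (chordF (e :: w)).card - (headSet (e :: w)).card :=
      Finset.card_sdiff_of_subset (Finset.filter_subset _ _)
    have hkA_le : (headSet (e :: w)).card ≤ (chordF (e :: w)).card :=
      Finset.card_le_card (Finset.filter_subset _ _)
    have hw1 : IsGaussCode ((e :: w).rotate 1) := isGaussCode_rotate hw 1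
    have hA1 := cc_trivial_tails hw1 (headSet ((e :: w).rotate 1)) (headSet_spec _)
    have hB1 := cc_trivial_heads hw1
      (chordF ((e :: w).rotate 1) \ headSet ((e :: w).rotate 1)) (compSet_spec _)
    have hA1' : WeldedEquiv (crossingChange (headSet ((e :: w).rotate 1)) (e :: w)) [] := by
      apply weldedEquiv_of_rotate (n := 1)
      rwa [← crossingChange_rotate]
    have hB1' : WeldedEquiv (crossingChange
        (chordF ((e :: w).rotate 1) \ headSet ((e :: w).rotate 1)) (e :: w)) [] := by
      apply weldedEquiv_of_rotate (n := 1)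
      rwa [← crossingChange_rotate]
    have hA1sub : ↑(headSet ((e :: w).rotate 1)) ⊆ chordSet (e :: w) := by
      rw [← chordSet_rotate (e :: w) 1, ← coe_chordF]
      exact_mod_cast Finset.filter_subset _ _
    have hB1sub : ↑(chordF ((e :: w).rotate 1) \ headSet ((e :: w).rotate 1)) ⊆
        chordSet (e :: w) := by
      rw [← chordSet_rotate (e :: w) 1, ← coe_chordF]
      exact_mod_cast Finset.sdiff_subset
    have hF1 : (chordF ((e :: w).rotate 1)).card = (chordF (e :: w)).card := by
      rw [chordF_rotate]
    have hkB1 : (chordF ((e :: w).rotate 1) \ headSet ((e :: w).rotate 1)).card =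
        (chordF ((e :: w).rotate 1)).card - (headSet ((e :: w).rotate 1)).card :=
      Finset.card_sdiff_of_subset (Finset.filter_subset _ _)
    have hkA1_le : (headSet ((e :: w).rotate 1)).card ≤ (chordF ((e :: w).rotate 1)).card :=
      Finset.card_le_card (Finset.filter_subset _ _)
    have hrot := headSet_rotate_one hw
    rw [hn'] at hn ⊢
    by_cases hcase : 2 * (headSet (e :: w)).card < (chordF (e :: w)).card
    · exact ⟨headSet (e :: w), hAsub, hcase, hA⟩
    by_cases hcase2 : 2 * (chordF (e :: w) \ headSet (e :: w)).card < (chordF (e :: w)).card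
    · exact ⟨chordF (e :: w) \ headSet (e :: w), hBsub, hcase2, hB⟩
    rcases hrot with h | h
    · exact ⟨chordF ((e :: w).rotate 1) \ headSet ((e :: w).rotate 1), hB1sub, by omega, hB1'⟩
    · exact ⟨headSet ((e :: w).rotate 1), hA1sub, by omega, hA1'⟩

end Aux6
lemma eq_nil_of_ncard_zero {w : GWord} (h : (chordSet w).ncard = 0) : w = [] := by
  cases w with
  | nil => rfl
  | cons e w =>
    exfalso
    have h1 : e.1 ∈ chordF (e :: w) := mem_chordF.2 ⟨e, List.mem_cons_self, rfl⟩
    rw [ncard_chordSet, Finset.card_eq_zero] at h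
    rw [h] at h1
    simp at h1

/-- Every non-trivial welded knot `K` satisfies
`u(K) ≤ (c(K) - 1) / 2`, where the welded knot is given by any Gauss code `D`
representing it. -/
theorem unknotting_le_half_crossing (D : GWord) (hD : IsGaussCode D)
    (hnt : ¬ WeldedEquiv D []) :
    (unknottingNum D : ℝ) ≤ ((minCrossing D : ℝ) - 1) / 2 := by
  have hTne : {n : ℕ | ∃ D' : GWord, IsGaussCode D' ∧ WeldedEquiv D D' ∧
      (chordSet D').ncard = n}.Nonempty :=
    ⟨(chordSet D).ncard, D, hD, Relation.EqvGen.refl _, rfl⟩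
  have hmem : ∃ D' : GWord, IsGaussCode D' ∧ WeldedEquiv D D' ∧
      (chordSet D').ncard = minCrossing D := Nat.sInf_mem hTne
  obtain ⟨D', hGC, hEq, hcard⟩ := hmem
  have hc1 : 1 ≤ minCrossing D := by
    by_contra hlt
    have h0 : minCrossing D = 0 := by omega
    rw [h0] at hcard
    have hD'nil := eq_nil_of_ncard_zero hcard
    subst hD'nil
    exact hnt hEq
  obtain ⟨S, hsub, hlt, heqv⟩ := key_lemma D' hGC (by rw [hcard]; exact hc1)
  have h1 : unknottingNumWord D' ≤ S.card := Nat.sInf_le ⟨S, hsub, rfl, heqv⟩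
  have h2 : unknottingNum D ≤ unknottingNumWord D' := Nat.sInf_le ⟨D', hGC, hEq, rfl⟩
  rw [hcard] at hlt
  have h3 : 2 * unknottingNum D + 1 ≤ minCrossing D := by omega
  rw [le_div_iff₀ (by norm_num : (0:ℝ) < 2)]
  have h4 : (2 * unknottingNum D + 1 : ℝ) ≤ (minCrossing D : ℝ) := by exact_mod_cast h3
  push_cast at h4
  linarith
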